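/- Suppose in every slot t the drift-plus-penalty satisfies L(Q(t+1)) - L(Q(t)) + V·T̃(t) ≤ B + V·T_max − ε·Q(t), with T̃(t) ≥ T_min, Q(1) = 0, Q(t) ≥ 0, ε > 0, V ≥ 0, B ≥ 0. Then the time-averaged queue backlog is bounded: (1/T) Σ_{t=1}^{T} Q(t) ≤ (B + V(T_max − T_min))/ε for all T ≥ 1. -/
import Mathlib


theorem queue_backlog_bound
    (Q : ℕ → ℝ) (Tt : ℕ → ℝ) (B V ε Tmax Tmin : ℝ)
    (hQ1 : Q 1 = 0)
    (hQpos : ∀ t, Q t ≥ 0)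
    (hB : B ≥ 0) (hV : V ≥ 0) (hε : ε > 0)
    (hTmin : ∀ t, Tt t ≥ Tmin)
    (L : ℝ → ℝ) (hL : ∀ q, L q = q ^ 2 / 2)
    (hdrift : ∀ t ≥ 1,
      L (Q (t + 1)) - L (Q t) + V * Tt t ≤ B + V * Tmax - ε * Q t) :
    ∀ T : ℕ, 1 ≤ T →
      (1 / (T : ℝ)) * ∑ t ∈ Finset.Icc 1 T, Q t ≤
        (B + V * (Tmax - Tmin)) / ε := by
  set C : ℝ := B + V * (Tmax - Tmin) with hC
  have key : ∀ T : ℕ, L (Q (T + 1)) + ε * ∑ t ∈ Finset.Icc 1 T, Q t ≤ T * C := by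
    intro T
    induction T with
    | zero => simp [hL, hQ1]
    | succ n ih =>
      have hd := hdrift (n + 1) (by omega)
      have hT : V * Tmin ≤ V * Tt (n + 1) := by
        exact mul_le_mul_of_nonneg_left (hTmin _) hV
      rw [Finset.sum_Icc_succ_top (by omega)]
      push_cast
      nlinarith [ih, hd, hT]
  intro T hT
  have hTpos : (0 : ℝ) < T := by exact_mod_cast hT
  have hLpos : 0 ≤ L (Q (T + 1)) := by
    rw [hL]; positivity
  have h1 : ε * ∑ t ∈ Finset.Icc 1 T, Q t ≤ T * C := by
    have := key T; linarith
  rw [one_div_mul_eq_div, div_le_div_iff₀ hTpos hε]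
  calc (∑ t ∈ Finset.Icc 1 T, Q t) * ε = ε * ∑ t ∈ Finset.Icc 1 T, Q t := by ring
    _ ≤ T * C := h1
    _ = C * T := by ring
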